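/- If an effect algebra with n elements has exactly (n-1)(n-2)/2 nontrivial defined sums (the maximum possible), then it is totally ordered, hence isomorphic to the scale effect algebra S_n. -/

import Mathlib

/-- An effect algebra: a set with `zero`, `one`, a partial commutative associative
sum (modelled as an `Option`-valued operation), unique complements, and
`e ⊕ 1` defined only for `e = 0`. -/
structure EffectAlgebra (E : Type*) where
  zero : E
  one : E
  add : E → E → Option E
  comm : ∀ e f, add e f = add f e
  assoc : ∀ e f g, (add e f).bind (fun s => add s g) = (add f g).bind (fun s => add e s)
  compl : E → E
  add_compl : ∀ e, add e (compl e) = some one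
  compl_unique : ∀ e f, add e f = some one → f = compl e
  one_max : ∀ e f, add e one = some f → e = zero

namespace EffectAlgebra

variable {E : Type*}

/-- Intrinsic order: `e ≤ f` iff `f = e ⊕ g` for some `g`. -/
def le (A : EffectAlgebra E) (e f : E) : Prop := ∃ g, A.add e g = some f

/-- Iterated sum `e ⊕ e ⊕ ⋯ ⊕ e` (`n` copies), when defined. -/
def nsum (A : EffectAlgebra E) (e : E) : ℕ → Option E
  | 0 => some A.zero
  | n + 1 => (nsum A e n).bind (fun s => A.add e s)

end EffectAlgebra

/-- The underlying set `{k/(n-1) : 0 ≤ k ≤ n-1}` of the scale effect algebra `S_n`. -/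
def scaleSet (n : ℕ) : Set ℝ := {x | ∃ k : ℕ, k ≤ n - 1 ∧ x = (k : ℝ) / ((n : ℝ) - 1)}

namespace EffectAlgebra

variable {E : Type*} (A : EffectAlgebra E)

lemma compl_add (e : E) : A.add (A.compl e) e = some A.one :=
  (A.comm _ _).trans (A.add_compl e)

lemma compl_compl (e : E) : A.compl (A.compl e) = e :=
  (A.compl_unique _ _ (A.compl_add e)).symm

lemma compl_one : A.compl A.one = A.zero :=
  A.one_max _ _ (A.compl_add A.one)

lemma one_add_zero : A.add A.one A.zero = some A.one := by
  have := A.add_compl A.one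
  rwa [A.compl_one] at this

lemma add_zero (f : E) : A.add f A.zero = some f := by
  have h1 : A.add (A.compl f) f = some A.one := A.compl_add f
  have h2 := A.assoc (A.compl f) f A.zero
  rw [h1, Option.bind_some, A.one_add_zero] at h2
  obtain ⟨s, hs1, hs2⟩ := Option.bind_eq_some_iff.mp h2.symm
  have : s = A.compl (A.compl f) := A.compl_unique _ _ hs2
  rw [hs1, this, A.compl_compl]

lemma zero_add (f : E) : A.add A.zero f = some f :=
  (A.comm _ _).trans (A.add_zero f)

lemma cancel {a b c d : E} (hab : A.add a b = some d) (hac : A.add a c = some d) :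
    b = c := by
  have key : ∀ x : E, A.add a x = some d → A.add (A.compl d) a = some (A.compl x) := by
    intro x hx
    have h1 := A.assoc a x (A.compl d)
    rw [hx, Option.bind_some, A.add_compl] at h1
    obtain ⟨s, hs1, hs2⟩ := Option.bind_eq_some_iff.mp h1.symm
    have hsa : s = A.compl a := A.compl_unique _ _ hs2
    -- now (x ⊕ d') ⊕ a = (compl a) ⊕ a = 1
    have h2 := A.assoc x (A.compl d) a
    rw [hs1, Option.bind_some, hsa, A.compl_add] at h2
    obtain ⟨u, hu1, hu2⟩ := Option.bind_eq_some_iff.mp h2.symm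
    have hux : u = A.compl x := A.compl_unique _ _ hu2
    rw [hu1, hux]
  have hb := key b hab
  have hc := key c hac
  rw [hb] at hc
  have := Option.some.inj hc
  calc b = A.compl (A.compl b) := (A.compl_compl b).symm
    _ = A.compl (A.compl c) := by rw [this]
    _ = c := A.compl_compl c

lemma add_one_eq {e f : E} (h : A.add e A.one = some f) : e = A.zero ∧ f = A.one := by
  have he := A.one_max _ _ h
  subst he
  rw [A.zero_add] at h
  exact ⟨rfl, (Option.some.inj h).symm⟩

lemma eq_zero_of_add_eq_zero {a b : E} (h : A.add a b = some A.zero) :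
    a = A.zero ∧ b = A.zero := by
  have h1 := A.assoc a b A.one
  rw [h, Option.bind_some, A.zero_add] at h1
  obtain ⟨s, hs1, _⟩ := Option.bind_eq_some_iff.mp h1.symm
  have hb : b = A.zero := A.one_max _ _ hs1
  subst hb
  rw [A.add_zero] at h
  exact ⟨Option.some.inj h, rfl⟩

lemma le_refl (e : E) : A.le e e := ⟨A.zero, A.add_zero e⟩

lemma le_trans {a b c : E} (h1 : A.le a b) (h2 : A.le b c) : A.le a c := by
  obtain ⟨g, hg⟩ := h1
  obtain ⟨h, hh⟩ := h2
  have h3 := A.assoc a g h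
  rw [hg, Option.bind_some, hh] at h3
  obtain ⟨w, hw1, hw2⟩ := Option.bind_eq_some_iff.mp h3.symm
  exact ⟨w, hw2⟩

lemma le_antisymm {a b : E} (h1 : A.le a b) (h2 : A.le b a) : a = b := by
  obtain ⟨g, hg⟩ := h1
  obtain ⟨h, hh⟩ := h2
  have h3 := A.assoc a g h
  rw [hg, Option.bind_some, hh] at h3
  obtain ⟨w, hw1, hw2⟩ := Option.bind_eq_some_iff.mp h3.symm
  have hw0 : w = A.zero := A.cancel hw2 (A.add_zero a)
  subst hw0
  have hg0 : g = A.zero := (A.eq_zero_of_add_eq_zero hw1).1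
  subst hg0
  rw [A.add_zero] at hg
  exact Option.some.inj hg

lemma zero_le (e : E) : A.le A.zero e := ⟨e, A.zero_add e⟩

lemma le_one (e : E) : A.le e A.one := ⟨A.compl e, A.add_compl e⟩

lemma eq_one_of_one_le {e : E} (h : A.le A.one e) : e = A.one := by
  obtain ⟨g, hg⟩ := h
  rw [A.comm] at hg
  exact ((A.add_one_eq hg).2)

/-- strict order -/
def slt (A : EffectAlgebra E) (a b : E) : Prop := A.le a b ∧ a ≠ b

lemma slt_of_slt_of_le {a b c : E} (h1 : A.slt a b) (h2 : A.le b c) : A.slt a c := by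
  refine ⟨A.le_trans h1.1 h2, ?_⟩
  rintro rfl
  exact h1.2 (A.le_antisymm h1.1 h2)

lemma slt_of_le_of_slt {a b c : E} (h1 : A.le a b) (h2 : A.slt b c) : A.slt a c := by
  refine ⟨A.le_trans h1 h2.1, ?_⟩
  rintro rfl
  exact h2.2 (A.le_antisymm h2.1 h1)

/-- If `y ≤ f` and `e ⊕ f` is defined, then `e ⊕ y` is defined, with sum below `g`. -/
lemma sub_exists {e f g y : E} (hle : A.le y f) (h : A.add e f = some g) :
    ∃ s, A.add e y = some s ∧ A.le s g ∧ (s = g → y = f) := by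
  obtain ⟨d, hd⟩ := hle
  have h1 := A.assoc e y d
  rw [hd, Option.bind_some, h] at h1
  obtain ⟨s, hs1, hs2⟩ := Option.bind_eq_some_iff.mp h1
  refine ⟨s, hs1, ⟨d, hs2⟩, ?_⟩
  rintro rfl
  have hd0 : d = A.zero := A.cancel hs2 (A.add_zero s)
  subst hd0
  rw [A.add_zero] at hd
  exact Option.some.inj hd

/-- decomposition: if `e ⊕ f = g`, `e ⊕ y = x` and `x < g` then `y < f`. -/
lemma slt_of_add {e f g y x : E} (hef : A.add e f = some g) (hey : A.add e y = some x)
    (hx : A.slt x g) : A.slt y f := by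
  obtain ⟨c, hc⟩ := hx.1
  have hc0 : c ≠ A.zero := by
    rintro rfl
    rw [A.add_zero] at hc
    exact hx.2 (Option.some.inj hc)
  have h1 := A.assoc e y c
  rw [hey, Option.bind_some, hc] at h1
  obtain ⟨w, hw1, hw2⟩ := Option.bind_eq_some_iff.mp h1.symm
  have hwf : w = f := A.cancel hw2 hef
  subst hwf
  refine ⟨⟨c, hw1⟩, ?_⟩
  rintro rfl
  exact hc0 (A.cancel hw1 (A.add_zero y))

end EffectAlgebra

namespace EffectAlgebra

variable {E : Type*} (A : EffectAlgebra E)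

open Finset in
open scoped Classical in
noncomputable def rnk [Fintype E] (A : EffectAlgebra E) (e : E) : ℕ :=
  (Finset.univ.filter (fun x => A.slt x e)).card

open Finset
open scoped Classical

variable [Fintype E]

lemma rnk_add (htot : ∀ a b : E, A.le a b ∨ A.le b a) {e f g : E}
    (h : A.add e f = some g) : A.rnk g = A.rnk e + A.rnk f := by
  classical
  set Be := Finset.univ.filter (fun x => A.slt x e) with hBe
  set Bf := Finset.univ.filter (fun x => A.slt x f) with hBf
  set Bg := Finset.univ.filter (fun x => A.slt x g) with hBg
  set C := Finset.univ.filter (fun x => A.le e x ∧ A.slt x g) with hC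
  have hleg : A.le e g := ⟨f, h⟩
  have hunion : Bg = Be ∪ C := by
    ext x
    simp only [hBe, hBf, hBg, hC, mem_filter, mem_union, mem_univ, true_and]
    constructor
    · intro hx
      rcases htot x e with hxe | hex
      · by_cases hxeq : x = e
        · subst hxeq
          exact Or.inr ⟨A.le_refl x, hx⟩
        · exact Or.inl ⟨hxe, hxeq⟩
      · exact Or.inr ⟨hex, hx⟩
    · rintro (hx | hx)
      · exact A.slt_of_slt_of_le hx hleg
      · exact hx.2
  have hdisj : Disjoint Be C := by
    rw [Finset.disjoint_left]
    intro x hx hx'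
    simp only [hBe, hC, mem_filter, mem_univ, true_and] at hx hx'
    exact hx.2 (A.le_antisymm hx'.1 hx.1).symm
  have hcard : C.card = Bf.card := by
    refine (Finset.card_bij (fun y _ => (A.add e y).getD A.zero) ?_ ?_ ?_).symm
    · intro y hy
      have hy' : A.slt y f := by
        simpa only [hBf, mem_filter, mem_univ, true_and] using hy
      obtain ⟨s, hs, hsg, hne⟩ := A.sub_exists hy'.1 h
      simp only [hC, mem_filter, mem_univ, true_and, hs, Option.getD_some]
      exact ⟨⟨y, hs⟩, hsg, fun heq => hy'.2 (hne heq)⟩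
    · intro y₁ hy₁ y₂ hy₂ heq
      have hy₁' : A.slt y₁ f := by
        simpa only [hBf, mem_filter, mem_univ, true_and] using hy₁
      have hy₂' : A.slt y₂ f := by
        simpa only [hBf, mem_filter, mem_univ, true_and] using hy₂
      obtain ⟨s₁, hs₁, _, _⟩ := A.sub_exists hy₁'.1 h
      obtain ⟨s₂, hs₂, _, _⟩ := A.sub_exists hy₂'.1 h
      simp only [hs₁, hs₂, Option.getD_some] at heq
      exact A.cancel (heq ▸ hs₁) hs₂
    · intro x hx
      simp only [hC, mem_filter, mem_univ, true_and] at hx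
      obtain ⟨⟨y, hy⟩, hxg⟩ := hx
      have hyf : A.slt y f := A.slt_of_add h hy hxg
      refine ⟨y, by simp only [hBf, mem_filter, mem_univ, true_and]; exact hyf, ?_⟩
      simp [hy]
  have : Bg.card = Be.card + C.card := by
    rw [hunion, Finset.card_union_of_disjoint hdisj]
  rw [rnk, rnk, rnk]
  rw [← hBe, ← hBf, ← hBg, this, hcard]

lemma rnk_one : A.rnk A.one = Fintype.card E - 1 := by
  classical
  have : Finset.univ.filter (fun x => A.slt x A.one) = Finset.univ.erase A.one := by
    ext x
    simp only [mem_filter, mem_univ, true_and, mem_erase, and_true]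
    exact ⟨fun h => h.2, fun h => ⟨A.le_one x, h⟩⟩
  rw [rnk]
  rw [this, Finset.card_erase_of_mem (mem_univ _), Finset.card_univ]

lemma rnk_lt_mono {a b : E} (h : A.slt a b) : A.rnk a < A.rnk b := by
  classical
  apply Finset.card_lt_card
  rw [Finset.ssubset_iff_of_subset]
  · exact ⟨a, by simp only [mem_filter, mem_univ, true_and]; exact h,
      by simp only [mem_filter, mem_univ, true_and]; exact fun h' => h'.2 rfl⟩
  · intro x hx
    simp only [mem_filter, mem_univ, true_and] at hx ⊢
    exact A.slt_of_slt_of_le hx h.1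

lemma rnk_le (e : E) : A.rnk e ≤ Fintype.card E - 1 := by
  classical
  have : Finset.univ.filter (fun x => A.slt x e) ⊆ Finset.univ.erase e := by
    intro x hx
    simp only [mem_filter, mem_univ, true_and] at hx
    simp only [mem_erase, mem_univ, and_true]
    exact hx.2
  calc A.rnk e ≤ (Finset.univ.erase e).card := Finset.card_le_card this
    _ = Fintype.card E - 1 := by rw [Finset.card_erase_of_mem (mem_univ _), Finset.card_univ]

lemma rnk_inj (htot : ∀ a b : E, A.le a b ∨ A.le b a) {a b : E}
    (h : A.rnk a = A.rnk b) : a = b := by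
  by_contra hne
  rcases htot a b with hab | hba
  · exact absurd h (Nat.ne_of_lt (A.rnk_lt_mono ⟨hab, hne⟩))
  · exact absurd h.symm (Nat.ne_of_lt (A.rnk_lt_mono ⟨hba, Ne.symm hne⟩))

lemma rnk_surj (htot : ∀ a b : E, A.le a b ∨ A.le b a) {k : ℕ}
    (hk : k < Fintype.card E) : ∃ e : E, A.rnk e = k := by
  classical
  have hcpos : 1 ≤ Fintype.card E := by omega
  have himg : Finset.univ.image (A.rnk) = Finset.range (Fintype.card E) := by
    apply Finset.eq_of_subset_of_card_le
    · intro x hx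
      simp only [mem_image, mem_univ, true_and] at hx
      obtain ⟨e, rfl⟩ := hx
      rw [Finset.mem_range]
      have := A.rnk_le e
      omega
    · rw [Finset.card_range,
        Finset.card_image_of_injective _ (fun a b hab => A.rnk_inj htot hab),
        Finset.card_univ]
  have : k ∈ Finset.univ.image (A.rnk) := by
    rw [himg, Finset.mem_range]; exact hk
  simpa using this

lemma defined_iff (htot : ∀ a b : E, A.le a b ∨ A.le b a) (e f : E) :
    (∃ g, A.add e f = some g) ↔ A.rnk e + A.rnk f ≤ Fintype.card E - 1 := by
  constructor
  · rintro ⟨g, hg⟩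
    rw [← A.rnk_add htot hg]
    exact A.rnk_le g
  · intro hle
    have hcompl : A.rnk e + A.rnk (A.compl e) = Fintype.card E - 1 := by
      rw [← A.rnk_add htot (A.add_compl e), A.rnk_one]
    rcases htot f (A.compl e) with hf | hf
    · obtain ⟨s, hs, _, _⟩ := A.sub_exists hf (A.add_compl e)
      exact ⟨s, hs⟩
    · by_cases heq : f = A.compl e
      · exact ⟨A.one, by rw [heq, A.add_compl]⟩
      · have := A.rnk_lt_mono (a := A.compl e) (b := f) ⟨hf, fun hh => heq hh.symm⟩
        omega


lemma total_of_max {n : ℕ} [DecidableEq E] (hn : 2 ≤ n)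
    (hcard : Fintype.card E = n)
    (hmax : (Finset.univ.filter (fun p : E × E =>
        p.1 ≠ A.zero ∧ p.1 ≠ A.one ∧ p.2 ≠ A.zero ∧ p.2 ≠ A.one ∧
        (A.add p.1 p.2).isSome)).card = (n - 1) * (n - 2) / 2) :
    ∀ a b : E, A.le a b ∨ A.le b a := by
  classical
  set Slt := Finset.univ.filter (fun p : E × E => A.slt p.1 p.2) with hSlt
  set Q := Slt.filter (fun p : E × E => p.1 ≠ A.zero) with hQ
  -- Step 1: the set in hmax is in bijection with Q
  have hPQ : (Finset.univ.filter (fun p : E × E =>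
        p.1 ≠ A.zero ∧ p.1 ≠ A.one ∧ p.2 ≠ A.zero ∧ p.2 ≠ A.one ∧
        (A.add p.1 p.2).isSome)).card = Q.card := by
    refine Finset.card_bij (fun p _ => (p.1, (A.add p.1 p.2).getD A.zero)) ?_ ?_ ?_
    · intro p hp
      simp only [Finset.mem_filter, Finset.mem_univ, true_and] at hp
      obtain ⟨h1, h2, h3, h4, h5⟩ := hp
      obtain ⟨g, hg⟩ := Option.isSome_iff_exists.mp h5
      simp only [hQ, hSlt, Finset.mem_filter, Finset.mem_univ, true_and, hg,
        Option.getD_some]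
      refine ⟨⟨⟨p.2, hg⟩, ?_⟩, h1⟩
      rintro rfl
      exact h3 (A.cancel hg (A.add_zero p.1))
    · intro p hp q hq heq
      simp only [Finset.mem_filter, Finset.mem_univ, true_and] at hp hq
      obtain ⟨g, hg⟩ := Option.isSome_iff_exists.mp hp.2.2.2.2
      obtain ⟨g', hg'⟩ := Option.isSome_iff_exists.mp hq.2.2.2.2
      have heq' : (p.1, (A.add p.1 p.2).getD A.zero) = (q.1, (A.add q.1 q.2).getD A.zero) := heq
      rw [Prod.mk.injEq] at heq'
      have h1 : p.1 = q.1 := heq'.1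
      have h2 := heq'.2
      simp only [hg, hg', Option.getD_some] at h2
      have hg'' : A.add p.1 q.2 = some g := by rw [h1, hg', h2]
      exact Prod.ext h1 (A.cancel hg hg'')
    · intro q hq
      simp only [hQ, hSlt, Finset.mem_filter, Finset.mem_univ, true_and] at hq
      obtain ⟨⟨⟨f, hf⟩, hne⟩, h0⟩ := hq
      have hf0 : f ≠ A.zero := by
        rintro rfl
        rw [A.add_zero] at hf
        exact hne (Option.some.inj hf)
      have hf1 : f ≠ A.one := by
        rintro rfl
        exact h0 (A.one_max _ _ hf)
      have h1 : q.1 ≠ A.one := by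
        rintro h
        rw [h] at hf
        have := A.eq_one_of_one_le ⟨f, hf⟩
        exact hne (h.trans this.symm)
      refine ⟨(q.1, f), ?_, ?_⟩
      · simp only [Finset.mem_filter, Finset.mem_univ, true_and]
        exact ⟨h0, h1, hf0, hf1, by rw [hf]; rfl⟩
      · simp only [hf, Option.getD_some]
  -- Step 2: the pairs (0, b)
  have hZ : (Slt.filter (fun p : E × E => ¬ p.1 ≠ A.zero)).card = n - 1 := by
    rw [← hcard, ← Finset.card_univ, ← Finset.card_erase_of_mem (Finset.mem_univ A.zero)]
    refine Finset.card_bij (fun p _ => p.2) ?_ ?_ ?_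
    · intro p hp
      simp only [hSlt, Finset.mem_filter, Finset.mem_univ, true_and, not_not] at hp
      simp only [Finset.mem_erase, Finset.mem_univ, and_true]
      exact fun h => hp.1.2 (hp.2.trans h.symm)
    · intro p hp q hq heq
      simp only [hSlt, Finset.mem_filter, Finset.mem_univ, true_and, not_not] at hp hq
      exact Prod.ext (hp.2.trans hq.2.symm) heq
    · intro b hb
      simp only [Finset.mem_erase, Finset.mem_univ, and_true] at hb
      refine ⟨(A.zero, b), ?_, rfl⟩
      simp only [hSlt, Finset.mem_filter, Finset.mem_univ, true_and, not_not]
      exact ⟨⟨A.zero_le b, Ne.symm hb⟩, trivial⟩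
  -- Step 3
  have hScard : Slt.card = (n - 1) * (n - 2) / 2 + (n - 1) := by
    rw [← Finset.card_filter_add_card_filter_not (p := fun p : E × E => p.1 ≠ A.zero)
      (s := Slt), ← hQ, hZ, ← hPQ, hmax]
  -- Step 4
  by_contra hcon
  push_neg at hcon
  obtain ⟨a, b, hab, hba⟩ := hcon
  have hne : a ≠ b := by rintro rfl; exact hab (A.le_refl a)
  set s₂ := Slt.image Prod.swap with hs₂
  have hc2 : s₂.card = Slt.card := Finset.card_image_of_injective _ Prod.swap_injective
  have hdisj : Disjoint Slt s₂ := by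
    rw [Finset.disjoint_left]
    intro p hp hp'
    simp only [hSlt, Finset.mem_filter, Finset.mem_univ, true_and] at hp
    simp only [hs₂, Finset.mem_image] at hp'
    obtain ⟨q, hq, hqp⟩ := hp'
    simp only [hSlt, Finset.mem_filter, Finset.mem_univ, true_and] at hq
    have h1 : q.1 = p.2 := congrArg Prod.snd hqp
    have h2 : q.2 = p.1 := by
      have := congrArg Prod.fst hqp; simpa using this
    rw [h1, h2] at hq
    exact hp.2 (A.le_antisymm hp.1 hq.1)
  have hsub : Slt ∪ s₂ ⊆ Finset.univ.offDiag \ {(a, b), (b, a)} := by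
    intro p hp
    rw [Finset.mem_union] at hp
    have key : ∀ r : E × E, r ∈ Slt → r ∈ Finset.univ.offDiag \ {(a, b), (b, a)} := by
      intro r hr
      simp only [hSlt, Finset.mem_filter, Finset.mem_univ, true_and] at hr
      simp only [Finset.mem_sdiff, Finset.mem_offDiag, Finset.mem_univ, true_and,
        Finset.mem_insert, Finset.mem_singleton]
      refine ⟨hr.2, ?_⟩
      rintro (rfl | rfl)
      · exact hab hr.1
      · exact hba hr.1
    rcases hp with hp | hp
    · exact key p hp
    · simp only [hs₂, Finset.mem_image] at hp
      obtain ⟨q, hq, rfl⟩ := hp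
      have hk := key q hq
      simp only [hSlt, Finset.mem_filter, Finset.mem_univ, true_and] at hq
      simp only [Finset.mem_sdiff, Finset.mem_offDiag, Finset.mem_univ, true_and,
        Finset.mem_insert, Finset.mem_singleton] at hk ⊢
      refine ⟨Ne.symm hk.1, ?_⟩
      rintro (h | h)
      · apply hba
        have h1 : q.2 = a := congrArg Prod.fst h
        have h2 : q.1 = b := congrArg Prod.snd h
        rw [← h1, ← h2]; exact hq.1
      · apply hab
        have h1 : q.2 = b := congrArg Prod.fst h
        have h2 : q.1 = a := congrArg Prod.snd h
        rw [← h1, ← h2]; exact hq.1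
  have hpairsub : ({(a, b), (b, a)} : Finset (E × E)) ⊆ Finset.univ.offDiag := by
    intro p hp
    simp only [Finset.mem_insert, Finset.mem_singleton] at hp
    simp only [Finset.mem_offDiag, Finset.mem_univ, true_and]
    rcases hp with rfl | rfl
    · exact hne
    · exact Ne.symm hne
  have hpaircard : ({(a, b), (b, a)} : Finset (E × E)).card = 2 :=
    Finset.card_pair (fun h => hne (congrArg Prod.fst h))
  have hkey : Slt.card + Slt.card ≤ n * n - n - 2 := by
    calc Slt.card + Slt.card = Slt.card + s₂.card := by rw [hc2]
      _ = (Slt ∪ s₂).card := (Finset.card_union_of_disjoint hdisj).symm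
      _ ≤ (Finset.univ.offDiag \ {(a, b), (b, a)}).card := Finset.card_le_card hsub
      _ = Finset.univ.offDiag.card - 2 := by rw [Finset.card_sdiff_of_subset hpairsub, hpaircard]
      _ = n * n - n - 2 := by
          rw [Finset.offDiag_card, Finset.card_univ, hcard]
  rw [hScard] at hkey
  obtain ⟨p, rfl⟩ : ∃ p, n = p + 2 := ⟨n - 2, by omega⟩
  have e1 : (p + 2 - 1) * (p + 2 - 2) = p * p + p := by
    have h1 : p + 2 - 1 = p + 1 := by omega
    have h2 : p + 2 - 2 = p := by omega
    rw [h1, h2]; ring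
  have e2 : (p + 2) * (p + 2) = p * p + 4 * p + 4 := by ring
  rw [e1, e2] at hkey
  have h3 : p + 2 - 1 = p + 1 := by omega
  rw [h3] at hkey
  generalize p * p = q at hkey
  omega

end EffectAlgebra

theorem max_defined_sums_scale {E : Type*} [Fintype E] [DecidableEq E]
    (A : EffectAlgebra E) (n : ℕ) (hn : 2 ≤ n) (hcard : Fintype.card E = n)
    (hmax : (Finset.univ.filter (fun p : E × E =>
        p.1 ≠ A.zero ∧ p.1 ≠ A.one ∧ p.2 ≠ A.zero ∧ p.2 ≠ A.one ∧
        (A.add p.1 p.2).isSome)).card = (n - 1) * (n - 2) / 2) :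
    (∀ a b : E, A.le a b ∨ A.le b a) ∧
    ∃ Θ : E → ℝ,
      (∀ e, Θ e ∈ scaleSet n) ∧
      Function.Injective Θ ∧
      (∀ x ∈ scaleSet n, ∃ e, Θ e = x) ∧
      Θ A.one = 1 ∧
      (∀ e f, (∃ g, A.add e f = some g) ↔ Θ e + Θ f ≤ 1) ∧
      (∀ e f g, A.add e f = some g → Θ g = Θ e + Θ f) := by
  classical
  have htot : ∀ a b : E, A.le a b ∨ A.le b a := A.total_of_max hn hcard hmax
  have hpos : (0 : ℝ) < (n : ℝ) - 1 := by
    have : (2 : ℝ) ≤ (n : ℝ) := by exact_mod_cast hn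
    linarith
  have hc0 : ((n : ℝ) - 1) ≠ 0 := ne_of_gt hpos
  have hcast : ((n - 1 : ℕ) : ℝ) = (n : ℝ) - 1 := by
    have : 1 ≤ n := by omega
    push_cast [this]
    ring
  have hr_le : ∀ e : E, A.rnk e ≤ n - 1 := fun e => by
    have := A.rnk_le e; omega
  refine ⟨htot, fun e => (A.rnk e : ℝ) / ((n : ℝ) - 1), ?_, ?_, ?_, ?_, ?_, ?_⟩
  · exact fun e => ⟨A.rnk e, hr_le e, rfl⟩
  · intro a b h
    simp only at h
    field_simp at h
    exact A.rnk_inj htot (by exact_mod_cast h)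
  · rintro x ⟨k, hk, rfl⟩
    obtain ⟨e, he⟩ := EffectAlgebra.rnk_surj A htot (k := k) (by omega)
    exact ⟨e, by simp only; rw [he]⟩
  · show (A.rnk A.one : ℝ) / ((n : ℝ) - 1) = 1
    rw [A.rnk_one, hcard, hcast, div_self hc0]
  · intro e f
    show _ ↔ (A.rnk e : ℝ) / ((n : ℝ) - 1) + (A.rnk f : ℝ) / ((n : ℝ) - 1) ≤ 1
    rw [A.defined_iff htot, hcard]
    rw [← add_div, div_le_one hpos, ← hcast]
    exact_mod_cast Iff.rfl
  · intro e f g h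
    show (A.rnk g : ℝ) / ((n : ℝ) - 1) = (A.rnk e : ℝ) / ((n : ℝ) - 1) + (A.rnk f : ℝ) / ((n : ℝ) - 1)
    rw [A.rnk_add htot h]
    push_cast
    rw [← add_div]
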